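/- For C > 0 let A*(C)² = (C + √(C²+4C))/2 and define ℓ(C) = ∫₀^{A*} A² dA / √((1+A²)(A*² − A²)(C·A*^{-2} + A²)). Then ℓ(C) → 0 as C → 0⁺ and ℓ(C) → π/2 as C → +∞. -/

import Mathlib

open Set Filter Real

noncomputable def Astar (C : ℝ) : ℝ :=
  Real.sqrt ((C + Real.sqrt (C ^ 2 + 4 * C)) / 2)

noncomputable def ellLen (C : ℝ) : ℝ :=
  ∫ A in (0:ℝ)..(Astar C),
    A ^ 2 / Real.sqrt ((1 + A ^ 2) * ((Astar C) ^ 2 - A ^ 2) * (C / (Astar C) ^ 2 + A ^ 2))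

open MeasureTheory

/-! ### Auxiliary definitions and lemmas -/

/-- The integrand after the substitution `A = Astar C * s`. -/
noncomputable def G (a s : ℝ) : ℝ :=
  s^2 / (Real.sqrt (1/a^2 + s^2) * Real.sqrt (1 - s^2) * Real.sqrt (1/(1+a^2) + s^2))

lemma G_meas (a : ℝ) : Measurable (G a) := by
  unfold G
  apply Measurable.div
  · fun_prop
  · apply Measurable.mul
    apply Measurable.mul
    · exact (continuous_const.add (continuous_pow 2)).sqrt.measurable
    · exact (continuous_const.sub (continuous_pow 2)).sqrt.measurable
    · exact (continuous_const.add (continuous_pow 2)).sqrt.measurable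

lemma G_nonneg (a s : ℝ) : 0 ≤ G a s := by unfold G; positivity

lemma G_le_bound (a s : ℝ) : G a s ≤ 1/Real.sqrt (1 - s^2) := by
  unfold G
  rcases le_or_gt (1 - s^2) 0 with h | h
  · rw [Real.sqrt_eq_zero_of_nonpos h]
    simp
  · rcases eq_or_ne s 0 with rfl | hs
    · simp
    · have hs2 : 0 < s^2 := by positivity
      have hD2 : 0 < Real.sqrt (1 - s^2) := Real.sqrt_pos.2 h
      have hD1 : |s| ≤ Real.sqrt (1/a^2 + s^2) := by
        rw [← Real.sqrt_sq_eq_abs]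
        exact Real.sqrt_le_sqrt (by linarith [div_nonneg zero_le_one (sq_nonneg a)])
      have h1a2 : (0:ℝ) ≤ 1/(1+a^2) := by positivity
      have hD3 : |s| ≤ Real.sqrt (1/(1+a^2) + s^2) := by
        rw [← Real.sqrt_sq_eq_abs]
        exact Real.sqrt_le_sqrt (by linarith)
      have hchain : s^2 * Real.sqrt (1 - s^2) ≤
          Real.sqrt (1/a^2 + s^2) * Real.sqrt (1 - s^2) * Real.sqrt (1/(1+a^2) + s^2) := by
        have h1 : s^2 * Real.sqrt (1 - s^2) = |s| * Real.sqrt (1 - s^2) * |s| := by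
          rw [show |s| * Real.sqrt (1 - s^2) * |s| = |s| * |s| * Real.sqrt (1 - s^2) from by ring,
            abs_mul_abs_self]; ring
        rw [h1]
        have := abs_pos.2 hs
        gcongr
      calc s^2 / (Real.sqrt (1/a^2 + s^2) * Real.sqrt (1 - s^2) * Real.sqrt (1/(1+a^2) + s^2))
          ≤ s^2 / (s^2 * Real.sqrt (1 - s^2)) := by
            apply div_le_div_of_nonneg_left (sq_nonneg s) (by positivity) hchain
        _ = 1 / Real.sqrt (1 - s^2) := by field_simp

lemma G_le_mul {a s : ℝ} (ha : 0 < a) (hs : s ∈ Ioc (0:ℝ) 1) :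
    G a s ≤ a * (1/Real.sqrt (1 - s^2)) := by
  obtain ⟨hs0, hs1⟩ := hs
  unfold G
  rcases eq_or_lt_of_le hs1 with rfl | hlt
  · simp
  · have h : 0 < 1 - s^2 := by nlinarith
    have hD2 : 0 < Real.sqrt (1 - s^2) := Real.sqrt_pos.2 h
    have hD1 : 1/a ≤ Real.sqrt (1/a^2 + s^2) := by
      rw [show (1:ℝ)/a = Real.sqrt ((1/a)^2) from (Real.sqrt_sq (by positivity)).symm]
      exact Real.sqrt_le_sqrt (by rw [div_pow, one_pow]; nlinarith)
    have h1a2 : (0:ℝ) ≤ 1/(1+a^2) := by positivity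
    have hD3 : s ≤ Real.sqrt (1/(1+a^2) + s^2) :=
      Real.le_sqrt_of_sq_le (by linarith)
    have hchain : (1/a) * Real.sqrt (1 - s^2) * s ≤
        Real.sqrt (1/a^2 + s^2) * Real.sqrt (1 - s^2) * Real.sqrt (1/(1+a^2) + s^2) := by
      have h1a : (0:ℝ) < 1/a := by positivity
      gcongr
    calc s^2 / (Real.sqrt (1/a^2 + s^2) * Real.sqrt (1 - s^2) * Real.sqrt (1/(1+a^2) + s^2))
        ≤ s^2 / ((1/a) * Real.sqrt (1 - s^2) * s) := by
          apply div_le_div_of_nonneg_left (sq_nonneg s) (by positivity) hchain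
      _ = a * s / Real.sqrt (1 - s^2) := by field_simp
      _ ≤ a * 1 / Real.sqrt (1 - s^2) := by gcongr
      _ = a * (1/Real.sqrt (1 - s^2)) := by ring

/-! ### The comparison integral `∫ s in (0,1], 1/√(1-s²) = π/2` -/

lemma ftc_arcsin {b : ℝ} (hb0 : 0 ≤ b) (hb1 : b < 1) :
    ∫ x in (0:ℝ)..b, 1 / Real.sqrt (1 - x^2) = Real.arcsin b := by
  have hcont : ContinuousOn (fun x : ℝ => 1 / Real.sqrt (1 - x^2)) (uIcc 0 b) := by
    apply ContinuousOn.div continuousOn_const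
    · exact (continuousOn_const.sub (continuousOn_pow 2)).sqrt
    · intro x hx
      rw [uIcc_of_le hb0] at hx
      have h1 : x^2 < 1 := by
        have : |x| < 1 := abs_lt.2 ⟨by linarith [hx.1], lt_of_le_of_lt hx.2 hb1⟩
        calc x^2 = |x|^2 := (sq_abs x).symm
          _ < 1 := by nlinarith [abs_nonneg x]
      exact ne_of_gt (Real.sqrt_pos.2 (by linarith))
  have h := intervalIntegral.integral_eq_sub_of_hasDerivAt (a := 0) (b := b)
    (f := Real.arcsin) (f' := fun x => 1 / Real.sqrt (1 - x^2)) ?_ ?_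
  · rw [h, Real.arcsin_zero, sub_zero]
  · intro x hx
    rw [uIcc_of_le hb0] at hx
    exact Real.hasDerivAt_arcsin (by intro h; rw [h] at hx; linarith [hx.1])
      (by intro h; rw [h] at hx; linarith [hx.2])
  · exact hcont.intervalIntegrable

lemma bn_lim : Tendsto (fun n : ℕ => 1 - 1/(n+1:ℝ)) atTop (nhds 1) := by
  have : Tendsto (fun n : ℕ => 1 / ((n : ℝ) + 1)) atTop (nhds 0) :=
    tendsto_one_div_add_atTop_nhds_zero_nat
  have h := (tendsto_const_nhds (x := (1:ℝ)) (f := atTop)).sub this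
  simpa using h

lemma bn_mem (n : ℕ) : 0 ≤ 1 - 1/(n+1:ℝ) ∧ 1 - 1/(n+1:ℝ) < 1 := by
  constructor
  · have h1 : (1:ℝ)/(n+1) ≤ 1 := by
      rw [div_le_one (by positivity)]; linarith [Nat.cast_nonneg (α := ℝ) n]
    linarith
  · have : (0:ℝ) < 1/(n+1) := by positivity
    linarith

lemma aecover_bn : MeasureTheory.AECover (volume.restrict (Ioc (0:ℝ) 1)) atTop
    (fun n : ℕ => Ioc (0:ℝ) (1 - 1/(n+1:ℝ))) :=
  MeasureTheory.aecover_Ioc_of_Ioc (tendsto_const_nhds) bn_lim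

lemma restrictEq (n : ℕ) : (volume.restrict (Ioc (0:ℝ) 1)).restrict (Ioc (0:ℝ) (1 - 1/(n+1:ℝ)))
    = volume.restrict (Ioc (0:ℝ) (1 - 1/(n+1:ℝ))) := by
  rw [Measure.restrict_restrict measurableSet_Ioc]
  congr 1
  rw [inter_eq_left]
  exact Ioc_subset_Ioc le_rfl (by linarith [(bn_mem n).2])

lemma hfi_bn (n : ℕ) : IntegrableOn (fun s : ℝ => 1/Real.sqrt (1 - s^2))
    (Ioc (0:ℝ) (1 - 1/(n+1:ℝ))) (volume.restrict (Ioc (0:ℝ) 1)) := by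
  unfold IntegrableOn
  rw [restrictEq]
  have hcont : ContinuousOn (fun x : ℝ => 1 / Real.sqrt (1 - x^2)) (Icc 0 (1 - 1/(n+1:ℝ))) := by
    apply ContinuousOn.div continuousOn_const
    · exact (continuousOn_const.sub (continuousOn_pow 2)).sqrt
    · intro x hx
      have h1 : x^2 < 1 := by
        have : |x| < 1 := abs_lt.2 ⟨by linarith [hx.1], lt_of_le_of_lt hx.2 (bn_mem n).2⟩
        calc x^2 = |x|^2 := (sq_abs x).symm
          _ < 1 := by nlinarith [abs_nonneg x]
      exact ne_of_gt (Real.sqrt_pos.2 (by linarith))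
  exact (hcont.integrableOn_Icc).mono_set Ioc_subset_Icc_self

lemma int_bn (n : ℕ) : ∫ s in Ioc (0:ℝ) (1 - 1/(n+1:ℝ)), 1/Real.sqrt (1 - s^2)
    ∂(volume.restrict (Ioc (0:ℝ) 1)) = Real.arcsin (1 - 1/(n+1:ℝ)) := by
  rw [restrictEq, ← intervalIntegral.integral_of_le (bn_mem n).1]
  exact ftc_arcsin (bn_mem n).1 (bn_mem n).2

lemma int_bn_lim : Tendsto (fun n : ℕ => ∫ s in Ioc (0:ℝ) (1 - 1/(n+1:ℝ)),
    1/Real.sqrt (1 - s^2) ∂(volume.restrict (Ioc (0:ℝ) 1))) atTop (nhds (π/2)) := by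
  simp only [int_bn]
  have : Real.arcsin 1 = π/2 := Real.arcsin_one
  have h := (Real.continuous_arcsin.tendsto 1).comp bn_lim
  rwa [this] at h

lemma bound_integrable : IntegrableOn (fun s : ℝ => 1/Real.sqrt (1 - s^2)) (Ioc (0:ℝ) 1) volume :=
  aecover_bn.integrable_of_integral_tendsto_of_nonneg_ae (π/2) hfi_bn
    (Filter.Eventually.of_forall (fun x => by positivity)) int_bn_lim

lemma bound_value : ∫ s in Ioc (0:ℝ) 1, 1/Real.sqrt (1 - s^2) = π/2 :=
  aecover_bn.integral_eq_of_tendsto_of_nonneg_ae (π/2)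
    (Filter.Eventually.of_forall (fun x => by positivity)) hfi_bn int_bn_lim

/-! ### Basic facts about `Astar` -/

lemma Astar_pos {C : ℝ} (hC : 0 < C) : 0 < Astar C := by
  apply Real.sqrt_pos.2
  have : 0 ≤ Real.sqrt (C^2 + 4*C) := Real.sqrt_nonneg _
  linarith

lemma Astar_sq {C : ℝ} (hC : 0 < C) : (Astar C)^2 = (C + Real.sqrt (C^2 + 4*C))/2 := by
  apply Real.sq_sqrt
  have : 0 ≤ Real.sqrt (C^2 + 4*C) := Real.sqrt_nonneg _
  linarith

lemma Astar_quartic {C : ℝ} (hC : 0 < C) : (Astar C)^4 = C * (1 + (Astar C)^2) := by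
  have h2 := Astar_sq hC
  have hs : (Real.sqrt (C^2 + 4*C))^2 = C^2 + 4*C := Real.sq_sqrt (by nlinarith)
  have h4 : (Astar C)^4 = ((Astar C)^2)^2 := by ring
  rw [h4, h2]
  nlinarith [hs]

lemma C_div {C : ℝ} (hC : 0 < C) : C / (Astar C)^2 = (Astar C)^2 / (1 + (Astar C)^2) := by
  have ha := Astar_pos hC
  have hq := Astar_quartic hC
  have h1 : (0:ℝ) < 1 + (Astar C)^2 := by positivity
  field_simp
  nlinarith [hq]

lemma sqrt_atTop : Tendsto Real.sqrt atTop atTop := by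
  apply Filter.tendsto_atTop_atTop.2
  intro b
  refine ⟨(max b 0)^2, fun x hx => ?_⟩
  calc b ≤ max b 0 := le_max_left _ _
    _ = Real.sqrt ((max b 0)^2) := (Real.sqrt_sq (le_max_right _ _)).symm
    _ ≤ Real.sqrt x := Real.sqrt_le_sqrt hx

lemma Astar_atTop : Tendsto Astar atTop atTop := by
  refine tendsto_atTop_mono' atTop ?_
    (sqrt_atTop.comp (Tendsto.atTop_div_const two_pos tendsto_id))
  filter_upwards [eventually_ge_atTop (0:ℝ)] with C hC
  show Real.sqrt (C/2) ≤ Astar C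
  apply Real.sqrt_le_sqrt
  have : 0 ≤ Real.sqrt (C^2 + 4*C) := Real.sqrt_nonneg _
  linarith

lemma Astar_cont : Continuous Astar := by
  apply Continuous.sqrt
  exact (continuous_id.add
    ((continuous_pow 2).add (continuous_const.mul continuous_id)).sqrt).div_const 2

lemma Astar_zero : Astar 0 = 0 := by
  unfold Astar; norm_num

lemma Astar_tendsto_zero : Tendsto Astar (nhdsWithin 0 (Ioi 0)) (nhds 0) := by
  have h := Astar_cont.tendsto 0
  rw [Astar_zero] at h
  exact h.mono_left nhdsWithin_le_nhds

/-! ### Substitution `A = Astar C * s` -/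

lemma integrand_eq {C a s : ℝ} (ha : 0 < a) (hq : C/a^2 = a^2/(1+a^2))
    (hs0 : 0 ≤ s) (hs1 : s ≤ 1) :
    a * ((a*s)^2 / Real.sqrt ((1+(a*s)^2) * (a^2-(a*s)^2) * (C/a^2+(a*s)^2))) = G a s := by
  have ha2 : (0:ℝ) < 1 + a^2 := by positivity
  have hinner : (1+(a*s)^2) * (a^2-(a*s)^2) * (C/a^2+(a*s)^2)
      = (a^3)^2 * ((1/a^2+s^2) * ((1-s^2) * (1/(1+a^2)+s^2))) := by
    rw [hq]; field_simp
  rw [hinner, Real.sqrt_mul (sq_nonneg _), Real.sqrt_sq (by positivity),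
      Real.sqrt_mul (by positivity : (0:ℝ) ≤ 1/a^2+s^2),
      Real.sqrt_mul (by nlinarith : (0:ℝ) ≤ 1-s^2)]
  unfold G
  have hassoc : Real.sqrt (1/a^2+s^2) * Real.sqrt (1-s^2) * Real.sqrt (1/(1+a^2)+s^2)
      = Real.sqrt (1/a^2+s^2) * (Real.sqrt (1-s^2) * Real.sqrt (1/(1+a^2)+s^2)) := by ring
  rw [hassoc]
  set D := Real.sqrt (1/a^2+s^2) * (Real.sqrt (1-s^2) * Real.sqrt (1/(1+a^2)+s^2)) with hD
  have h1 : a * ((a*s)^2 / (a^3 * D)) = (a^3 * s^2) / (a^3 * D) := by ring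
  rw [h1, mul_div_mul_left _ _ (pow_ne_zero 3 ha.ne')]

lemma ellLen_eq {C : ℝ} (hC : 0 < C) : ellLen C = ∫ s in Ioc (0:ℝ) 1, G (Astar C) s := by
  have ha := Astar_pos hC
  set a := Astar C with hadef
  set f : ℝ → ℝ := fun A => A^2 / Real.sqrt ((1+A^2) * (a^2-A^2) * (C/a^2+A^2)) with hf
  have key : a • (∫ s in (0:ℝ)..1, f (a*s)) = ∫ x in (a*0)..(a*1), f x :=
    intervalIntegral.smul_integral_comp_mul_left f a
  rw [mul_zero, mul_one] at key
  have h1 : ellLen C = ∫ x in (0:ℝ)..a, f x := by rfl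
  rw [h1, ← key, smul_eq_mul, ← intervalIntegral.integral_const_mul]
  rw [intervalIntegral.integral_congr (g := G a) ?_, intervalIntegral.integral_of_le zero_le_one]
  intro s hs
  rw [uIcc_of_le zero_le_one] at hs
  exact integrand_eq ha (C_div hC) hs.1 hs.2

lemma G_tendsto {s : ℝ} (hs : s ∈ Ioc (0:ℝ) 1) :
    Tendsto (fun C => G (Astar C) s) atTop (nhds (1/Real.sqrt (1 - s^2))) := by
  obtain ⟨hs0, hs1⟩ := hs
  rcases eq_or_lt_of_le hs1 with rfl | hlt
  · have : (fun C => G (Astar C) 1) = fun _ => (0:ℝ) := by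
      funext C; unfold G; norm_num
    rw [this]
    norm_num
  · have hsq : Tendsto (fun C => (Astar C)^2) atTop atTop :=
      (tendsto_pow_atTop two_ne_zero).comp Astar_atTop
    have h1 : Tendsto (fun C => 1/(Astar C)^2) atTop (nhds 0) := by
      simp only [one_div]; exact hsq.inv_tendsto_atTop
    have h2 : Tendsto (fun C => 1/(1+(Astar C)^2)) atTop (nhds 0) := by
      simp only [one_div]; exact (tendsto_atTop_add_const_left atTop 1 hsq).inv_tendsto_atTop
    have hD1 : Tendsto (fun C => Real.sqrt (1/(Astar C)^2 + s^2)) atTop (nhds s) := by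
      have := (h1.add (tendsto_const_nhds (x := s^2))).sqrt
      rwa [zero_add, Real.sqrt_sq hs0.le] at this
    have hD3 : Tendsto (fun C => Real.sqrt (1/(1+(Astar C)^2) + s^2)) atTop (nhds s) := by
      have := (h2.add (tendsto_const_nhds (x := s^2))).sqrt
      rwa [zero_add, Real.sqrt_sq hs0.le] at this
    have hden : Tendsto (fun C => Real.sqrt (1/(Astar C)^2 + s^2) * Real.sqrt (1 - s^2) *
        Real.sqrt (1/(1+(Astar C)^2) + s^2)) atTop (nhds (s * Real.sqrt (1 - s^2) * s)) :=
      (hD1.mul tendsto_const_nhds).mul hD3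
    have hD2 : (0:ℝ) < Real.sqrt (1 - s^2) := Real.sqrt_pos.2 (by nlinarith)
    have hne : s * Real.sqrt (1 - s^2) * s ≠ 0 := by positivity
    have := (tendsto_const_nhds (x := s^2)).div hden hne
    have heq : s^2 / (s * Real.sqrt (1 - s^2) * s) = 1/Real.sqrt (1 - s^2) := by
      field_simp
    rwa [heq] at this

theorem stmt_18 :
    Tendsto ellLen (nhdsWithin 0 (Ioi 0)) (nhds 0) ∧
    Tendsto ellLen atTop (nhds (π / 2)) := by
  constructor
  · -- C → 0⁺
    have hub : ∀ C ∈ Ioi (0:ℝ), ellLen C ≤ Astar C * (π/2) := by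
      intro C hC
      rw [mem_Ioi] at hC
      have ha := Astar_pos hC
      have hGint : IntegrableOn (G (Astar C)) (Ioc (0:ℝ) 1) volume := by
        apply Integrable.mono' ((bound_integrable).const_mul (Astar C))
          (G_meas (Astar C)).aestronglyMeasurable
        refine (ae_restrict_iff' measurableSet_Ioc).2 (Filter.Eventually.of_forall fun s hs => ?_)
        rw [Real.norm_eq_abs, abs_of_nonneg (G_nonneg _ _)]
        exact G_le_mul ha hs
      rw [ellLen_eq hC]
      calc (∫ s in Ioc (0:ℝ) 1, G (Astar C) s)
          ≤ ∫ s in Ioc (0:ℝ) 1, Astar C * (1/Real.sqrt (1 - s^2)) := by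
            apply integral_mono_ae hGint ((bound_integrable).const_mul (Astar C))
            refine (ae_restrict_iff' measurableSet_Ioc).2
              (Filter.Eventually.of_forall fun s hs => G_le_mul ha hs)
        _ = Astar C * ∫ s in Ioc (0:ℝ) 1, 1/Real.sqrt (1 - s^2) := integral_const_mul _ _
        _ = Astar C * (π/2) := by rw [bound_value]
    have hlb : ∀ C ∈ Ioi (0:ℝ), 0 ≤ ellLen C := by
      intro C hC
      rw [mem_Ioi] at hC
      rw [ellLen_eq hC]
      exact setIntegral_nonneg measurableSet_Ioc (fun s _ => G_nonneg _ _)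
    have hA : Tendsto (fun C => Astar C * (π/2)) (nhdsWithin 0 (Ioi 0)) (nhds 0) := by
      have := Astar_tendsto_zero.mul_const (π/2)
      simpa using this
    refine tendsto_of_tendsto_of_tendsto_of_le_of_le' tendsto_const_nhds hA ?_ ?_
    · filter_upwards [self_mem_nhdsWithin] with C hC using hlb C hC
    · filter_upwards [self_mem_nhdsWithin] with C hC using hub C hC
  · -- C → ∞
    have key : Tendsto (fun C => ∫ s in Ioc (0:ℝ) 1, G (Astar C) s) atTop (nhds (π/2)) := by
      rw [← bound_value]
      apply MeasureTheory.tendsto_integral_filter_of_dominated_convergence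
        (bound := fun s => 1/Real.sqrt (1 - s^2))
      · exact Filter.Eventually.of_forall fun C => (G_meas (Astar C)).aestronglyMeasurable
      · refine Filter.Eventually.of_forall fun C => Filter.Eventually.of_forall fun s => ?_
        rw [Real.norm_eq_abs, abs_of_nonneg (G_nonneg _ _)]
        exact G_le_bound _ _
      · exact bound_integrable
      · exact (ae_restrict_iff' measurableSet_Ioc).2
          (Filter.Eventually.of_forall fun s hs => G_tendsto hs)
    refine key.congr' ?_
    filter_upwards [eventually_gt_atTop (0:ℝ)] with C hC using (ellLen_eq hC).symm
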